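/- Let (R, α) be a multiplicative Hom-Lie conformal superalgebra. Then GDer(R), QDer(R) and C(R) are subalgebras of Ω: each is closed under the twist α'(D) = D ∘ α (sending the α^k-part into the α^{k+1}-part) and under the commutator [D_λ D']_μ(a) = D_λ(D'_{μ−λ}(a)) − (−1)^{|D||D'|} D'_{μ−λ}(D_λ(a)) (sending the α^k-part times the α^s-part into the α^{k+s}-part, with polynomial coefficients in λ). -/

import Mathlib

noncomputable section

namespace HLCS

open scoped BigOperators

/-- Evaluation at `l : ℂ` of a polynomial (in `λ`) with coefficients in `M`,
encoded as a finitely supported family of coefficients. -/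
def pev {M : Type} [AddCommGroup M] [Module ℂ M] (l : ℂ) (p : ℕ →₀ M) : M :=
  p.sum fun n r => l ^ n • r

/-- Evaluation of a polynomial with coefficients in `M` at an operator `T`
(used for substitutions such as `-λ - ∂`). -/
def pevOp {M : Type} [AddCommGroup M] [Module ℂ M] (T : Module.End ℂ M) (p : ℕ →₀ M) : M :=
  p.sum fun n r => (T ^ n) r

/-- The super sign `(-1)^{|a||b|}` attached to parities `i`, `j`. -/
def sg (i j : ZMod 2) : ℂ := (-1 : ℂ) ^ (i * j).val

/-- The data of a `ℤ₂`-graded `ℂ[∂]`-module `R` with an endomorphism `α` and a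
`ℂ`-bilinear `λ`-bracket with values in `ℂ[λ] ⊗ R` (encoded by its coefficients). -/
structure Data (R : Type) [AddCommGroup R] [Module ℂ R] where
  der : Module.End ℂ R
  alpha : Module.End ℂ R
  G : ZMod 2 → Submodule ℂ R
  br : R →ₗ[ℂ] R →ₗ[ℂ] (ℕ →₀ R)

namespace Data

variable {R : Type} [AddCommGroup R] [Module ℂ R] (S : Data R)

/-- `[a_λ b]` evaluated at `λ = l`. -/
def lb (l : ℂ) (a b : R) : R := pev l (S.br a b)

/-- `[a_{-l-∂} b]` : the bracket with `-l - ∂` substituted for `λ`. -/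
def lbOp (l : ℂ) (a b : R) : R :=
  pevOp ((-l) • (1 : Module.End ℂ R) - S.der) (S.br a b)

/-- Multiplicativity: `α [a_λ b] = [α(a)_λ α(b)]`. -/
def Mult : Prop := ∀ (l : ℂ) (a b : R), S.alpha (S.lb l a b) = S.lb l (S.alpha a) (S.alpha b)

end Data

variable {R : Type} [AddCommGroup R] [Module ℂ R]

/-- `(R, α)` with the given data is a Hom-Lie conformal superalgebra.
All polynomial identities in `λ, μ` are stated by evaluating at arbitrary
complex numbers (which is equivalent, `ℂ` being infinite). -/
structure IsHLCS (S : Data R) : Prop where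
  internal : DirectSum.IsInternal S.G
  der_even : ∀ i, ∀ a ∈ S.G i, S.der a ∈ S.G i
  alpha_even : ∀ i, ∀ a ∈ S.G i, S.alpha a ∈ S.G i
  alpha_der : ∀ a, S.alpha (S.der a) = S.der (S.alpha a)
  br_grade : ∀ i j, ∀ a ∈ S.G i, ∀ b ∈ S.G j, ∀ n, S.br a b n ∈ S.G (i + j)
  conf_left : ∀ (l : ℂ) (a b : R), S.lb l (S.der a) b = -l • S.lb l a b
  conf_right : ∀ (l : ℂ) (a b : R), S.lb l a (S.der b) = S.der (S.lb l a b) + l • S.lb l a b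
  skew : ∀ i j, ∀ a ∈ S.G i, ∀ b ∈ S.G j, ∀ l : ℂ,
    S.lb l a b = (-sg i j) • S.lbOp l b a
  jacobi : ∀ i j, ∀ a ∈ S.G i, ∀ b ∈ S.G j, ∀ (c : R) (l m : ℂ),
    S.lb l (S.alpha a) (S.lb m b c) =
      S.lb (l + m) (S.lb l a b) (S.alpha c) + sg i j • S.lb m (S.alpha b) (S.lb l a c)

end HLCS
namespace HLCS

variable {R : Type} [AddCommGroup R] [Module ℂ R]

/-- A homogeneous conformal linear map of parity `d` on `R`, encoded as the family of
its evaluations `F l : R → R` (`l : ℂ`): it is `ℂ`-linear, polynomial in `l`, and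
satisfies `F_λ(∂a) = (∂ + λ) F_λ(a)`. -/
structure IsConfMap (S : Data R) (d : ZMod 2) (F : ℂ → R → R) : Prop where
  map_add : ∀ (l : ℂ) (a b : R), F l (a + b) = F l a + F l b
  map_smul : ∀ (l c : ℂ) (a : R), F l (c • a) = c • F l a
  poly : ∀ a : R, ∃ p : ℕ →₀ R, ∀ l : ℂ, F l a = pev l p
  conf : ∀ (l : ℂ) (a : R), F l (S.der a) = S.der (F l a) + l • F l a
  grade : ∀ i, ∀ a ∈ S.G i, ∀ l : ℂ, F l a ∈ S.G (i + d)

/-- Membership in `Ω`: a homogeneous conformal linear map commuting with `α`. -/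
def InOmega (S : Data R) (d : ZMod 2) (F : ℂ → R → R) : Prop :=
  IsConfMap S d F ∧ ∀ (l : ℂ) (a : R), F l (S.alpha a) = S.alpha (F l a)

/-- An `α^k`-derivation of parity `d`. -/
def IsDer (S : Data R) (k : ℕ) (d : ZMod 2) (F : ℂ → R → R) : Prop :=
  InOmega S d F ∧ ∀ i, ∀ a ∈ S.G i, ∀ (b : R) (l m : ℂ),
    F l (S.lb m a b) =
      S.lb (l + m) (F l a) ((S.alpha ^ k) b) +
        ((-1 : ℂ) ^ ((i * d).val)) • S.lb m ((S.alpha ^ k) a) (F l b)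

/-- The commutator `[D_λ D']_μ (a) = D_λ(D'_{μ-λ}(a)) - (-1)^{|D||D'|} D'_{μ-λ}(D_λ(a))`,
with `e = (-1)^{|D||D'|}`; first argument `l` is `λ`, second `m` is `μ`. -/
def brkt (e : ℂ) (F G : ℂ → R → R) : ℂ → ℂ → R → R :=
  fun l m a => F l (G (m - l) a) - e • G (m - l) (F l a)

/-- The twist `α'(D) = D ∘ α`. -/
def tw (S : Data R) (F : ℂ → R → R) : ℂ → R → R := fun l a => F l (S.alpha a)

/-- A generalized `α^k`-derivation of parity `d`. -/
def IsGDer (S : Data R) (k : ℕ) (d : ZMod 2) (F : ℂ → R → R) : Prop :=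
  InOmega S d F ∧ ∃ F' F'' : ℂ → R → R, InOmega S d F' ∧ InOmega S d F'' ∧
    ∀ i, ∀ a ∈ S.G i, ∀ (b : R) (l m : ℂ),
      S.lb (l + m) (F m a) ((S.alpha ^ k) b) +
        ((-1 : ℂ) ^ ((d * i).val)) • S.lb l ((S.alpha ^ k) a) (F' m b) = F'' m (S.lb l a b)

/-- An `α^k`-quasiderivation of parity `d`. -/
def IsQDer (S : Data R) (k : ℕ) (d : ZMod 2) (F : ℂ → R → R) : Prop :=
  InOmega S d F ∧ ∃ F' : ℂ → R → R, InOmega S d F' ∧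
    ∀ i, ∀ a ∈ S.G i, ∀ (b : R) (l m : ℂ),
      S.lb (l + m) (F m a) ((S.alpha ^ k) b) +
        ((-1 : ℂ) ^ ((d * i).val)) • S.lb l ((S.alpha ^ k) a) (F m b) = F' m (S.lb l a b)

/-- An `α^k`-centroid of parity `d`. -/
def IsCent (S : Data R) (k : ℕ) (d : ZMod 2) (F : ℂ → R → R) : Prop :=
  InOmega S d F ∧ ∀ i, ∀ a ∈ S.G i, ∀ (b : R) (l m : ℂ),
    S.lb (l + m) (F m a) ((S.alpha ^ k) b) =
      ((-1 : ℂ) ^ ((d * i).val)) • S.lb l ((S.alpha ^ k) a) (F m b) ∧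
    S.lb (l + m) (F m a) ((S.alpha ^ k) b) = F m (S.lb l a b)

/-- An `α^k`-quasicentroid of parity `d`. -/
def IsQC (S : Data R) (k : ℕ) (d : ZMod 2) (F : ℂ → R → R) : Prop :=
  InOmega S d F ∧ ∀ i, ∀ a ∈ S.G i, ∀ (b : R) (l m : ℂ),
    S.lb (l + m) (F m a) ((S.alpha ^ k) b) =
      ((-1 : ℂ) ^ ((d * i).val)) • S.lb l ((S.alpha ^ k) a) (F m b)

/-- An `α^k`-central derivation of parity `d`. -/
def IsZDer (S : Data R) (k : ℕ) (d : ZMod 2) (F : ℂ → R → R) : Prop :=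
  InOmega S d F ∧ ∀ (a b : R) (l m : ℂ),
    S.lb (l + m) (F m a) ((S.alpha ^ k) b) = 0 ∧ F m (S.lb l a b) = 0

/-- Membership in the center `Z(R)`. -/
def IsCentral (S : Data R) (x : R) : Prop := ∀ (l : ℂ) (y : R), S.lb l x y = 0

end HLCS
namespace HLCS

variable {R : Type} [AddCommGroup R] [Module ℂ R]


/-! ### Auxiliary lemmas -/

section Aux

lemma pev_zero (l : ℂ) : pev l (0 : ℕ →₀ R) = 0 := Finsupp.sum_zero_index

lemma pev_add (l : ℂ) (p q : ℕ →₀ R) : pev l (p + q) = pev l p + pev l q :=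
  Finsupp.sum_add_index' (fun _ => smul_zero _) (fun _ r s => smul_add _ r s)

/-- `pev` as an additive monoid hom. -/
def pevHom (l : ℂ) : (ℕ →₀ R) →+ R where
  toFun := pev l
  map_zero' := pev_zero l
  map_add' := pev_add l

lemma pev_sub (l : ℂ) (p q : ℕ →₀ R) : pev l (p - q) = pev l p - pev l q :=
  map_sub (pevHom l) p q

lemma pev_smul (l c : ℂ) (p : ℕ →₀ R) : pev l (c • p) = c • pev l p := by
  unfold pev
  rw [Finsupp.sum_smul_index' (fun n => smul_zero _), Finsupp.smul_sum]
  exact Finsupp.sum_congr fun n _ => smul_comm _ _ _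

lemma pev_single (l : ℂ) (n : ℕ) (r : R) : pev l (Finsupp.single n r) = l ^ n • r := by
  unfold pev
  exact Finsupp.sum_single_index (smul_zero _)

lemma pev_sum (l : ℂ) {ι : Type} (s : Finset ι) (g : ι → ℕ →₀ R) :
    pev l (∑ j ∈ s, g j) = ∑ j ∈ s, pev l (g j) :=
  map_sum (pevHom l) g s

/-- A family `f : ℂ → R` is polynomial. -/
def PolyFam (f : ℂ → R) : Prop := ∃ p : ℕ →₀ R, ∀ l : ℂ, f l = pev l p

lemma PolyFam.congr {f g : ℂ → R} (h : PolyFam f) (hfg : ∀ l, g l = f l) : PolyFam g := by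
  obtain ⟨p, hp⟩ := h
  exact ⟨p, fun l => (hfg l).trans (hp l)⟩

lemma PolyFam.add {f g : ℂ → R} (hf : PolyFam f) (hg : PolyFam g) :
    PolyFam (fun l => f l + g l) := by
  obtain ⟨p, hp⟩ := hf
  obtain ⟨q, hq⟩ := hg
  exact ⟨p + q, fun l => by show f l + g l = _; rw [hp, hq, pev_add]⟩

lemma PolyFam.sub {f g : ℂ → R} (hf : PolyFam f) (hg : PolyFam g) :
    PolyFam (fun l => f l - g l) := by
  obtain ⟨p, hp⟩ := hf
  obtain ⟨q, hq⟩ := hg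
  exact ⟨p - q, fun l => by show f l - g l = _; rw [hp, hq, pev_sub]⟩

lemma PolyFam.smul (c : ℂ) {f : ℂ → R} (hf : PolyFam f) : PolyFam (fun l => c • f l) := by
  obtain ⟨p, hp⟩ := hf
  exact ⟨c • p, fun l => by show c • f l = _; rw [hp, pev_smul]⟩

lemma PolyFam.comp (T : R →ₗ[ℂ] R) {f : ℂ → R} (hf : PolyFam f) :
    PolyFam (fun l => T (f l)) := by
  obtain ⟨p, hp⟩ := hf
  refine ⟨p.mapRange T (map_zero T), fun l => ?_⟩
  show T (f l) = _
  rw [hp]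
  unfold pev
  rw [Finsupp.sum_mapRange_index (fun n => smul_zero _), map_finsuppSum]
  exact Finsupp.sum_congr fun n _ => map_smul T _ _

lemma polyFam_shift_pev (l₀ : ℂ) (p : ℕ →₀ R) : PolyFam (fun m : ℂ => pev (m - l₀) p) := by
  induction p using Finsupp.induction with
  | zero => exact ⟨0, fun m => by show pev (m - l₀) 0 = _; rw [pev_zero, pev_zero]⟩
  | single_add n r q hnq hr ih =>
    have h1 : PolyFam (fun m : ℂ => pev (m - l₀) (Finsupp.single n r)) := by
      refine ⟨∑ j ∈ Finset.range (n + 1),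
        Finsupp.single j (((n.choose j : ℂ) * (-l₀) ^ (n - j)) • r), fun m => ?_⟩
      show pev (m - l₀) (Finsupp.single n r) = _
      rw [pev_single, pev_sum]
      simp only [pev_single]
      rw [sub_eq_add_neg, add_pow, Finset.sum_smul]
      refine Finset.sum_congr rfl fun j _ => ?_
      rw [smul_smul]
      congr 1
      ring
    exact (h1.add ih).congr fun m => by show pev (m - l₀) _ = _; rw [pev_add]

lemma polyFam_shift (l₀ : ℂ) {f : ℂ → R} (hf : PolyFam f) :
    PolyFam (fun m => f (m - l₀)) := by
  obtain ⟨p, hp⟩ := hf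
  exact (polyFam_shift_pev l₀ p).congr fun m => hp (m - l₀)

lemma alpha_pow_comm {S : Data R} {F : ℂ → R → R}
    (h : ∀ (l : ℂ) (a : R), F l (S.alpha a) = S.alpha (F l a)) (n : ℕ) (l : ℂ) (a : R) :
    F l ((S.alpha ^ n) a) = (S.alpha ^ n) (F l a) := by
  induction n generalizing a with
  | zero => simp
  | succ n ih =>
    rw [pow_succ, Module.End.mul_apply, Module.End.mul_apply, ih (S.alpha a), h]

lemma alpha_pow_mem {S : Data R} (hS : IsHLCS S) (n : ℕ) (i : ZMod 2) {a : R}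
    (ha : a ∈ S.G i) : (S.alpha ^ n) a ∈ S.G i := by
  induction n with
  | zero => simpa using ha
  | succ n ih =>
    rw [pow_succ', Module.End.mul_apply]
    exact hS.alpha_even i _ ih

lemma pow_val_add (x y : ZMod 2) :
    (-1 : ℂ) ^ ((x + y).val) = (-1 : ℂ) ^ x.val * (-1 : ℂ) ^ y.val := by
  have h : ∀ z : ZMod 2, z = 0 ∨ z = 1 := by decide
  have e00 : ((0 : ZMod 2) + 0).val = 0 := by decide
  have e01 : ((0 : ZMod 2) + 1).val = 1 := by decide
  have e10 : ((1 : ZMod 2) + 0).val = 1 := by decide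
  have e11 : ((1 : ZMod 2) + 1).val = 0 := by decide
  have v0 : (0 : ZMod 2).val = 0 := by decide
  have v1 : (1 : ZMod 2).val = 1 := by decide
  rcases h x with rfl | rfl <;> rcases h y with rfl | rfl <;>
    · simp only [e00, e01, e10, e11, v0, v1]
      norm_num

variable (S : Data R)

lemma lb_add_left (l : ℂ) (a a' b : R) :
    S.lb l (a + a') b = S.lb l a b + S.lb l a' b := by
  unfold Data.lb
  rw [map_add, LinearMap.add_apply, pev_add]

lemma lb_sub_left (l : ℂ) (a a' b : R) :
    S.lb l (a - a') b = S.lb l a b - S.lb l a' b := by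
  unfold Data.lb
  rw [map_sub, LinearMap.sub_apply, pev_sub]

lemma lb_smul_left (l c : ℂ) (a b : R) : S.lb l (c • a) b = c • S.lb l a b := by
  unfold Data.lb
  rw [map_smul, LinearMap.smul_apply, pev_smul]

lemma lb_add_right (l : ℂ) (a b b' : R) :
    S.lb l a (b + b') = S.lb l a b + S.lb l a b' := by
  unfold Data.lb
  rw [map_add, pev_add]

lemma lb_sub_right (l : ℂ) (a b b' : R) :
    S.lb l a (b - b') = S.lb l a b - S.lb l a b' := by
  unfold Data.lb
  rw [map_sub, pev_sub]

lemma lb_smul_right (l c : ℂ) (a b : R) : S.lb l a (c • b) = c • S.lb l a b := by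
  unfold Data.lb
  rw [map_smul, pev_smul]

end Aux

section Omega

variable {S : Data R}

lemma inOmega_tw (hS : IsHLCS S) {d : ZMod 2} {F : ℂ → R → R}
    (h : InOmega S d F) : InOmega S d (tw S F) := by
  obtain ⟨hc, hcomm⟩ := h
  refine ⟨⟨?_, ?_, ?_, ?_, ?_⟩, ?_⟩
  · intro l a b
    simp only [tw, map_add, hc.map_add]
  · intro l c a
    simp only [tw, map_smul, hc.map_smul]
  · intro a
    exact hc.poly (S.alpha a)
  · intro l a
    simp only [tw]
    rw [hS.alpha_der, hc.conf]
  · intro i a ha l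
    exact hc.grade i _ (hS.alpha_even i a ha) l
  · intro l a
    simp only [tw]
    rw [hcomm]

lemma inOmega_brkt {d d' : ZMod 2} {F G : ℂ → R → R}
    (hF : InOmega S d F) (hG : InOmega S d' G) (e l₀ : ℂ) :
    InOmega S (d + d') (brkt e F G l₀) := by
  obtain ⟨hcF, hmF⟩ := hF
  obtain ⟨hcG, hmG⟩ := hG
  refine ⟨⟨?_, ?_, ?_, ?_, ?_⟩, ?_⟩
  · intro m a b
    simp only [brkt, hcG.map_add, hcF.map_add, smul_add]
    abel
  · intro m c a
    simp only [brkt, hcG.map_smul, hcF.map_smul]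
    rw [smul_sub, smul_comm e c]
  · intro a
    have Flin : R →ₗ[ℂ] R :=
      { toFun := F l₀, map_add' := hcF.map_add l₀, map_smul' := hcF.map_smul l₀ }
    have h1 : PolyFam (fun m => F l₀ (G (m - l₀) a)) :=
      PolyFam.comp { toFun := F l₀, map_add' := hcF.map_add l₀, map_smul' := hcF.map_smul l₀ }
        (polyFam_shift l₀ (hcG.poly a))
    have h2 : PolyFam (fun m => G (m - l₀) (F l₀ a)) :=
      polyFam_shift l₀ (hcG.poly (F l₀ a))
    exact h1.sub (h2.smul e)
  · intro m a
    simp only [brkt, hcG.conf, hcF.conf, hcF.map_add, hcF.map_smul, hcG.map_add,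
      hcG.map_smul, map_sub, map_smul, smul_sub, smul_add]
    module
  · intro i a ha m
    have h1 := hcF.grade (i + d') _ (hcG.grade i a ha (m - l₀)) l₀
    have h2 := hcG.grade (i + d) _ (hcF.grade i a ha l₀) (m - l₀)
    rw [show i + d' + d = i + (d + d') from by ring] at h1
    rw [show i + d + d' = i + (d + d') from by ring] at h2
    exact sub_mem h1 (Submodule.smul_mem _ e h2)
  · intro m a
    simp only [brkt, hmG, hmF, map_sub, map_smul]

end Omega


section Core

variable {S : Data R}

lemma core_gder (hS : IsHLCS S) {k s : ℕ} {d d' : ZMod 2}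
    {F F' F'' G G' G'' : ℂ → R → R}
    (hΩF : InOmega S d F) (hΩF' : InOmega S d F') (hΩF'' : InOmega S d F'')
    (hΩG : InOmega S d' G) (hΩG' : InOmega S d' G') (hΩG'' : InOmega S d' G'')
    (hrF : ∀ i, ∀ a ∈ S.G i, ∀ (b : R) (l m : ℂ),
      S.lb (l + m) (F m a) ((S.alpha ^ k) b) +
        ((-1 : ℂ) ^ ((d * i).val)) • S.lb l ((S.alpha ^ k) a) (F' m b) = F'' m (S.lb l a b))
    (hrG : ∀ i, ∀ a ∈ S.G i, ∀ (b : R) (l m : ℂ),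
      S.lb (l + m) (G m a) ((S.alpha ^ s) b) +
        ((-1 : ℂ) ^ ((d' * i).val)) • S.lb l ((S.alpha ^ s) a) (G' m b) = G'' m (S.lb l a b))
    (l₀ : ℂ) :
    ∀ i, ∀ a ∈ S.G i, ∀ (b : R) (l m : ℂ),
      S.lb (l + m) (brkt ((-1 : ℂ) ^ ((d * d').val)) F G l₀ m a) ((S.alpha ^ (k + s)) b) +
        ((-1 : ℂ) ^ (((d + d') * i).val)) •
          S.lb l ((S.alpha ^ (k + s)) a) (brkt ((-1 : ℂ) ^ ((d * d').val)) F' G' l₀ m b) =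
      brkt ((-1 : ℂ) ^ ((d * d').val)) F'' G'' l₀ m (S.lb l a b) := by
  intro i a ha b ν μ
  have hGa : G (μ - l₀) a ∈ S.G (i + d') := hΩG.1.grade i a ha (μ - l₀)
  have hFa : F l₀ a ∈ S.G (i + d) := hΩF.1.grade i a ha l₀
  have hAka : (S.alpha ^ k) a ∈ S.G i := alpha_pow_mem hS k i ha
  have hAsa : (S.alpha ^ s) a ∈ S.G i := alpha_pow_mem hS s i ha
  have hA : ∀ x : R, (S.alpha ^ k) ((S.alpha ^ s) x) = (S.alpha ^ (k + s)) x := fun x => by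
    rw [← Module.End.mul_apply, ← pow_add]
  have hB : ∀ x : R, (S.alpha ^ s) ((S.alpha ^ k) x) = (S.alpha ^ (k + s)) x := fun x => by
    rw [← Module.End.mul_apply, ← pow_add, add_comm s k]
  have hGk : ∀ x : R, (S.alpha ^ k) (G (μ - l₀) x) = G (μ - l₀) ((S.alpha ^ k) x) :=
    fun x => (alpha_pow_comm hΩG.2 k (μ - l₀) x).symm
  have hG'k : ∀ x : R, (S.alpha ^ k) (G' (μ - l₀) x) = G' (μ - l₀) ((S.alpha ^ k) x) :=
    fun x => (alpha_pow_comm hΩG'.2 k (μ - l₀) x).symm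
  have hFs : ∀ x : R, (S.alpha ^ s) (F l₀ x) = F l₀ ((S.alpha ^ s) x) :=
    fun x => (alpha_pow_comm hΩF.2 s l₀ x).symm
  have hF's : ∀ x : R, (S.alpha ^ s) (F' l₀ x) = F' l₀ ((S.alpha ^ s) x) :=
    fun x => (alpha_pow_comm hΩF'.2 s l₀ x).symm
  simp only [brkt]
  rw [lb_sub_left, lb_smul_left, lb_sub_right, lb_smul_right]
  rw [← hrG i a ha b ν (μ - l₀), hΩF''.1.map_add, hΩF''.1.map_smul,
    ← hrF (i + d') _ hGa ((S.alpha ^ s) b) (ν + (μ - l₀)) l₀,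
    ← hrF i _ hAsa (G' (μ - l₀) b) ν l₀,
    ← hrF i a ha b ν l₀, hΩG''.1.map_add, hΩG''.1.map_smul,
    ← hrG (i + d) _ hFa ((S.alpha ^ k) b) (ν + l₀) (μ - l₀),
    ← hrG i _ hAka (F' l₀ b) ν (μ - l₀)]
  simp only [hA, hB, hGk, hG'k, hFs, hF's,
    show ν + (μ - l₀) + l₀ = ν + μ from by ring,
    show ν + l₀ + (μ - l₀) = ν + μ from by ring]
  rw [show (d + d') * i = d * i + d' * i from by ring,
    show d * (i + d') = d * i + d * d' from by ring,
    show d' * (i + d) = d' * i + d * d' from by ring]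
  simp only [pow_val_add]
  rcases Nat.even_or_odd ((d * d').val) with hpar | hpar
  · rw [hpar.neg_one_pow]
    module
  · rw [hpar.neg_one_pow]
    module

lemma core_cent (hS : IsHLCS S) {k s : ℕ} {d d' : ZMod 2}
    {F G : ℂ → R → R}
    (hΩF : InOmega S d F) (hΩG : InOmega S d' G)
    (hrF : ∀ i, ∀ a ∈ S.G i, ∀ (b : R) (l m : ℂ),
      S.lb (l + m) (F m a) ((S.alpha ^ k) b) =
        ((-1 : ℂ) ^ ((d * i).val)) • S.lb l ((S.alpha ^ k) a) (F m b) ∧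
      S.lb (l + m) (F m a) ((S.alpha ^ k) b) = F m (S.lb l a b))
    (hrG : ∀ i, ∀ a ∈ S.G i, ∀ (b : R) (l m : ℂ),
      S.lb (l + m) (G m a) ((S.alpha ^ s) b) =
        ((-1 : ℂ) ^ ((d' * i).val)) • S.lb l ((S.alpha ^ s) a) (G m b) ∧
      S.lb (l + m) (G m a) ((S.alpha ^ s) b) = G m (S.lb l a b))
    (l₀ : ℂ) :
    ∀ i, ∀ a ∈ S.G i, ∀ (b : R) (l m : ℂ),
      S.lb (l + m) (brkt ((-1 : ℂ) ^ ((d * d').val)) F G l₀ m a) ((S.alpha ^ (k + s)) b) =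
        ((-1 : ℂ) ^ (((d + d') * i).val)) •
          S.lb l ((S.alpha ^ (k + s)) a) (brkt ((-1 : ℂ) ^ ((d * d').val)) F G l₀ m b) ∧
      S.lb (l + m) (brkt ((-1 : ℂ) ^ ((d * d').val)) F G l₀ m a) ((S.alpha ^ (k + s)) b) =
        brkt ((-1 : ℂ) ^ ((d * d').val)) F G l₀ m (S.lb l a b) := by
  intro i a ha b ν μ
  have hGa : G (μ - l₀) a ∈ S.G (i + d') := hΩG.1.grade i a ha (μ - l₀)
  have hFa : F l₀ a ∈ S.G (i + d) := hΩF.1.grade i a ha l₀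
  have hAka : (S.alpha ^ k) a ∈ S.G i := alpha_pow_mem hS k i ha
  have hAsa : (S.alpha ^ s) a ∈ S.G i := alpha_pow_mem hS s i ha
  have hA : ∀ x : R, (S.alpha ^ k) ((S.alpha ^ s) x) = (S.alpha ^ (k + s)) x := fun x => by
    rw [← Module.End.mul_apply, ← pow_add]
  have hB : ∀ x : R, (S.alpha ^ s) ((S.alpha ^ k) x) = (S.alpha ^ (k + s)) x := fun x => by
    rw [← Module.End.mul_apply, ← pow_add, add_comm s k]
  have hZA : F l₀ (G (μ - l₀) (S.lb ν a b)) =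
      S.lb (ν + μ) (F l₀ (G (μ - l₀) a)) ((S.alpha ^ (k + s)) b) := by
    rw [← (hrG i a ha b ν (μ - l₀)).2,
      ← (hrF (i + d') _ hGa ((S.alpha ^ s) b) (ν + (μ - l₀)) l₀).2,
      hA b, show ν + (μ - l₀) + l₀ = ν + μ from by ring]
  have hZB : F l₀ (G (μ - l₀) (S.lb ν a b)) =
      ((-1 : ℂ) ^ ((d' * i).val)) • (((-1 : ℂ) ^ ((d * i).val)) •
        S.lb ν ((S.alpha ^ (k + s)) a) (F l₀ (G (μ - l₀) b))) := by
    rw [← (hrG i a ha b ν (μ - l₀)).2, (hrG i a ha b ν (μ - l₀)).1, hΩF.1.map_smul,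
      ← (hrF i _ hAsa (G (μ - l₀) b) ν l₀).2, (hrF i _ hAsa (G (μ - l₀) b) ν l₀).1, hA a]
  have hZC : G (μ - l₀) (F l₀ (S.lb ν a b)) =
      S.lb (ν + μ) (G (μ - l₀) (F l₀ a)) ((S.alpha ^ (k + s)) b) := by
    rw [← (hrF i a ha b ν l₀).2,
      ← (hrG (i + d) _ hFa ((S.alpha ^ k) b) (ν + l₀) (μ - l₀)).2,
      hB b, show ν + l₀ + (μ - l₀) = ν + μ from by ring]
  have hZD : G (μ - l₀) (F l₀ (S.lb ν a b)) =
      ((-1 : ℂ) ^ ((d * i).val)) • (((-1 : ℂ) ^ ((d' * i).val)) •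
        S.lb ν ((S.alpha ^ (k + s)) a) (G (μ - l₀) (F l₀ b))) := by
    rw [← (hrF i a ha b ν l₀).2, (hrF i a ha b ν l₀).1, hΩG.1.map_smul,
      ← (hrG i _ hAka (F l₀ b) ν (μ - l₀)).2, (hrG i _ hAka (F l₀ b) ν (μ - l₀)).1, hB a]
  constructor
  · simp only [brkt]
    rw [lb_sub_left, lb_smul_left, lb_sub_right, lb_smul_right, ← hZA, ← hZC, hZB, hZD]
    rw [show (d + d') * i = d * i + d' * i from by ring]
    simp only [pow_val_add]
    module
  · simp only [brkt]
    rw [lb_sub_left, lb_smul_left, hZA, hZC]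

end Core

/-- For a multiplicative Hom-Lie conformal superalgebra `(R, α)`,
the spaces `GDer(R)`, `QDer(R)` and `C(R)` are subalgebras of `Ω`: each is closed
under the twist `α'(D) = D ∘ α` (sending the `α^k`-part into the `α^{k+1}`-part)
and under the commutator (sending the `α^k`-part times the `α^s`-part into the
`α^{k+s}`-part, with polynomial coefficients in `λ`). -/
theorem gder_qder_cent_subalgebras (S : Data R) (hS : IsHLCS S) (hmult : S.Mult) :
    ((∀ (k : ℕ) (d : ZMod 2) (F : ℂ → R → R),
        IsGDer S k d F → IsGDer S (k + 1) d (tw S F)) ∧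
      (∀ (k s : ℕ) (d d' : ZMod 2) (F G : ℂ → R → R),
        IsGDer S k d F → IsGDer S s d' G →
          ∀ l : ℂ, IsGDer S (k + s) (d + d') (brkt ((-1 : ℂ) ^ ((d * d').val)) F G l))) ∧
    ((∀ (k : ℕ) (d : ZMod 2) (F : ℂ → R → R),
        IsQDer S k d F → IsQDer S (k + 1) d (tw S F)) ∧
      (∀ (k s : ℕ) (d d' : ZMod 2) (F G : ℂ → R → R),
        IsQDer S k d F → IsQDer S s d' G →
          ∀ l : ℂ, IsQDer S (k + s) (d + d') (brkt ((-1 : ℂ) ^ ((d * d').val)) F G l))) ∧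
    ((∀ (k : ℕ) (d : ZMod 2) (F : ℂ → R → R),
        IsCent S k d F → IsCent S (k + 1) d (tw S F)) ∧
      (∀ (k s : ℕ) (d d' : ZMod 2) (F G : ℂ → R → R),
        IsCent S k d F → IsCent S s d' G →
          ∀ l : ℂ, IsCent S (k + s) (d + d') (brkt ((-1 : ℂ) ^ ((d * d').val)) F G l))) := by
  refine ⟨⟨?_, ?_⟩, ⟨?_, ?_⟩, ⟨?_, ?_⟩⟩
  · -- GDer twist
    intro k d F hF
    obtain ⟨hΩ, F', F'', hΩ', hΩ'', hrel⟩ := hF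
    refine ⟨inOmega_tw hS hΩ, tw S F', tw S F'', inOmega_tw hS hΩ', inOmega_tw hS hΩ'', ?_⟩
    intro i a ha b l m
    have hp : ∀ x : R, (S.alpha ^ (k + 1)) x = (S.alpha ^ k) (S.alpha x) := fun x => by
      rw [pow_succ, Module.End.mul_apply]
    simp only [tw, hp]
    rw [hmult l a b]
    exact hrel i _ (hS.alpha_even i a ha) (S.alpha b) l m
  · -- GDer bracket
    intro k s d d' F G hF hG l₀
    obtain ⟨hΩF, F', F'', hΩF', hΩF'', hrF⟩ := hF
    obtain ⟨hΩG, G', G'', hΩG', hΩG'', hrG⟩ := hG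
    exact ⟨inOmega_brkt hΩF hΩG _ l₀, brkt _ F' G' l₀, brkt _ F'' G'' l₀,
      inOmega_brkt hΩF' hΩG' _ l₀, inOmega_brkt hΩF'' hΩG'' _ l₀,
      core_gder hS hΩF hΩF' hΩF'' hΩG hΩG' hΩG'' hrF hrG l₀⟩
  · -- QDer twist
    intro k d F hF
    obtain ⟨hΩ, F', hΩ', hrel⟩ := hF
    refine ⟨inOmega_tw hS hΩ, tw S F', inOmega_tw hS hΩ', ?_⟩
    intro i a ha b l m
    have hp : ∀ x : R, (S.alpha ^ (k + 1)) x = (S.alpha ^ k) (S.alpha x) := fun x => by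
      rw [pow_succ, Module.End.mul_apply]
    simp only [tw, hp]
    rw [hmult l a b]
    exact hrel i _ (hS.alpha_even i a ha) (S.alpha b) l m
  · -- QDer bracket
    intro k s d d' F G hF hG l₀
    obtain ⟨hΩF, F', hΩF', hrF⟩ := hF
    obtain ⟨hΩG, G', hΩG', hrG⟩ := hG
    exact ⟨inOmega_brkt hΩF hΩG _ l₀, brkt _ F' G' l₀, inOmega_brkt hΩF' hΩG' _ l₀,
      core_gder hS hΩF hΩF hΩF' hΩG hΩG hΩG' hrF hrG l₀⟩
  · -- Cent twist
    intro k d F hF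
    obtain ⟨hΩ, hrel⟩ := hF
    refine ⟨inOmega_tw hS hΩ, ?_⟩
    intro i a ha b l m
    have hp : ∀ x : R, (S.alpha ^ (k + 1)) x = (S.alpha ^ k) (S.alpha x) := fun x => by
      rw [pow_succ, Module.End.mul_apply]
    simp only [tw, hp]
    constructor
    · exact (hrel i _ (hS.alpha_even i a ha) (S.alpha b) l m).1
    · rw [hmult l a b]
      exact (hrel i _ (hS.alpha_even i a ha) (S.alpha b) l m).2
  · -- Cent bracket
    intro k s d d' F G hF hG l₀
    obtain ⟨hΩF, hrF⟩ := hF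
    obtain ⟨hΩG, hrG⟩ := hG
    exact ⟨inOmega_brkt hΩF hΩG _ l₀, core_cent hS hΩF hΩG hrF hrG l₀⟩

end HLCS
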